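/- Dual-number-valued characters are tangent vectors: let M be a smooth manifold without boundary modeled on ℝ^n (finite-dimensional), Hausdorff and second countable, and let ℝ[ε] denote the algebra of dual numbers over ℝ (ε² = 0). For every unital ℝ-algebra homomorphism φ : C^∞(M) → ℝ[ε] there exist a unique point x ∈ M and a unique ℝ-linear map D : C^∞(M) → ℝ satisfying the Leibniz rule D(fg) = f(x)·D(g) + D(f)·g(x) for all f, g ∈ C^∞(M), such that φ(f) = f(x) + D(f)·ε for every f ∈ C^∞(M). -/

import Mathlib

open scoped Manifold
open Function Set

section Aux

variable {n : ℕ} {M : Type*} [TopologicalSpace M]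
    [ChartedSpace (EuclideanSpace ℝ (Fin n)) M]
    [IsManifold (𝓡 n) (⊤ : ℕ∞) M] [T2Space M] [SecondCountableTopology M]

/-- Milnor's exercise: every real character of `C^∞(M)` is evaluation at a point. -/
theorem aux_char_is_eval (ψ : C^(⊤ : ℕ∞)⟮𝓡 n, M; ℝ⟯ →ₐ[ℝ] ℝ) :
    ∃ x : M, ∀ f : C^(⊤ : ℕ∞)⟮𝓡 n, M; ℝ⟯, ψ f = f x := by
  haveI : LocallyCompactSpace M := Manifold.locallyCompact_of_finiteDimensional (𝓡 n)
  by_cases hM : IsEmpty M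
  · exfalso
    have h10 : (1 : C^(⊤ : ℕ∞)⟮𝓡 n, M; ℝ⟯) = 0 := by
      ext y
      exact hM.elim y
    have h1 := map_one ψ
    rw [h10, map_zero] at h1
    exact one_ne_zero h1.symm
  rw [not_isEmpty_iff] at hM
  -- a compact exhaustion with `K 0 = ∅`
  set K : CompactExhaustion M := (CompactExhaustion.choice M).shiftr with hK
  -- an open cover adapted to the exhaustion
  set U : ℕ → Set M := fun i => interior (K (i + 2)) \ K i with hU
  have hUopen : ∀ i, IsOpen (U i) := fun i =>
    isOpen_interior.sdiff (K.isCompact i).isClosed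
  have hUcov : (univ : Set M) ⊆ ⋃ i, U i := by
    intro x _
    rcases (CompactExhaustion.choice M).mem_diff_shiftr_find x with ⟨h1, h2⟩
    refine mem_iUnion.2 ⟨(CompactExhaustion.choice M).find x, ?_, h2⟩
    exact K.subset_interior ((Nat.lt_succ_self _)) h1
  obtain ⟨ρ, hρ⟩ := SmoothPartitionOfUnity.exists_isSubordinate (𝓡 n) isClosed_univ U hUopen hUcov
  -- the proper function `h`
  set h : M → ℝ := fun x => ∑ᶠ i, ρ i x • ((i : ℕ) : ℝ) with hh
  have hsmooth : ContMDiff (𝓡 n) 𝓘(ℝ, ℝ) (⊤ : ℕ∞) h :=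
    ρ.contMDiff_finsum_smul fun i x _ => contMDiffAt_const
  set hC : C^(⊤ : ℕ∞)⟮𝓡 n, M; ℝ⟯ := ⟨h, hsmooth⟩ with hhC
  have hbound : ∀ (m : ℕ) (x : M), x ∉ K (m + 2) → ((m : ℝ) + 1) ≤ h x := by
    intro m x hx
    have hsupp : ∀ i, ρ i x ≠ 0 → m + 1 ≤ i := by
      intro i hi
      by_contra hlt
      push_neg at hlt
      have h1 : x ∈ tsupport (ρ i) := subset_tsupport _ hi
      have h2 : x ∈ U i := hρ i h1
      exact hx (K.subset (by omega) (interior_subset h2.1))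
    have hsum1 : ∑ i ∈ ρ.finsupport x, ρ i x = 1 := ρ.sum_finsupport x (mem_univ x)
    have hsum2 : h x = ∑ i ∈ ρ.finsupport x, ρ i x • ((i : ℕ) : ℝ) :=
      (ρ.sum_finsupport_smul_eq_finsum x fun i _ => ((i : ℕ) : ℝ)).symm
    calc ((m : ℝ) + 1) = ∑ i ∈ ρ.finsupport x, ρ i x * ((m : ℝ) + 1) := by
          rw [← Finset.sum_mul, hsum1, one_mul]
      _ ≤ ∑ i ∈ ρ.finsupport x, ρ i x • ((i : ℕ) : ℝ) := by
          refine Finset.sum_le_sum fun i hi => ?_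
          have hne : ρ i x ≠ 0 := by simpa using (ρ.mem_finsupport x).1 hi
          have : ((m : ℝ) + 1) ≤ ((i : ℕ) : ℝ) := by exact_mod_cast hsupp i hne
          simpa [smul_eq_mul] using mul_le_mul_of_nonneg_left this (ρ.nonneg i x)
      _ = h x := hsum2.symm
  -- the compact set where we look for the point
  set c : ℝ := ψ hC with hc
  set m : ℕ := ⌈c⌉₊ with hm
  set S : Set M := {x | h x = c} with hS
  have hSclosed : IsClosed S := isClosed_eq hsmooth.continuous continuous_const
  have hSsub : S ⊆ K (m + 2) := by
    intro x hx
    by_contra hxK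
    have := hbound m x hxK
    rw [hx] at this
    have hcm : c ≤ (m : ℝ) := Nat.le_ceil c
    linarith
  have hScompact : IsCompact S := (K.isCompact (m + 2)).of_isClosed_subset hSclosed hSsub
  -- main argument
  by_contra hcon
  push_neg at hcon
  have hker : ∀ x : M, ∃ g : C^(⊤ : ℕ∞)⟮𝓡 n, M; ℝ⟯, ψ g = 0 ∧ g x ≠ 0 := by
    intro x
    obtain ⟨f, hf⟩ := hcon x
    refine ⟨f - algebraMap ℝ _ (ψ f), ?_, ?_⟩
    · rw [map_sub, AlgHom.commutes]; simp
    · simpa [sub_eq_zero] using fun hfx => hf hfx.symm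
  choose g hg0 hgx using hker
  have hVopen : ∀ x : M, IsOpen {y | g x y ≠ 0} :=
    fun x => isOpen_compl_singleton.preimage (g x).contMDiff.continuous
  have hScov : S ⊆ ⋃ x : M, {y | g x y ≠ 0} := fun y _ => mem_iUnion.2 ⟨y, hgx y⟩
  obtain ⟨t, ht⟩ := hScompact.elim_finite_subcover _ hVopen hScov
  set G : C^(⊤ : ℕ∞)⟮𝓡 n, M; ℝ⟯ :=
    (hC - algebraMap ℝ _ c) ^ 2 + ∑ x ∈ t, (g x) ^ 2 with hG
  have hGeval : ∀ y : M, G y = (h y - c) ^ 2 + ∑ x ∈ t, (g x y) ^ 2 := by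
    intro y
    show (ContMDiffMap.evalRingHom y : C^(⊤ : ℕ∞)⟮𝓡 n, M; ℝ⟯ →+* ℝ) G = _
    rw [hG, map_add, map_pow, map_sub, map_sum]
    rfl
  have hGpos : ∀ y : M, 0 < G y := by
    intro y
    rw [hGeval y]
    by_cases hy : h y = c
    · have hyS : y ∈ S := hy
      obtain ⟨x, hxt, hgxy⟩ := mem_iUnion₂.1 (ht hyS)
      have hp : 0 < ∑ x ∈ t, (g x y) ^ 2 :=
        Finset.sum_pos' (fun i _ => sq_nonneg _) ⟨x, hxt, sq_pos_of_ne_zero hgxy⟩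
      positivity
    · have : 0 < (h y - c) ^ 2 := sq_pos_of_ne_zero (sub_ne_zero.mpr hy)
      have hs : 0 ≤ ∑ x ∈ t, (g x y) ^ 2 := Finset.sum_nonneg fun i _ => sq_nonneg _
      linarith
  have hψG : ψ G = 0 := by
    rw [hG, map_add, map_pow, map_sub, AlgHom.commutes, map_sum]
    simp [hg0, hc]
  set Ginv : C^(⊤ : ℕ∞)⟮𝓡 n, M; ℝ⟯ :=
    ⟨fun y => (G y)⁻¹, G.contMDiff.inv₀ fun y => (hGpos y).ne'⟩ with hGinv
  have hmul : G * Ginv = 1 := by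
    ext y
    exact mul_inv_cancel₀ (hGpos y).ne'
  have : (1 : ℝ) = 0 := by
    calc (1 : ℝ) = ψ (G * Ginv) := by rw [hmul, map_one]
      _ = ψ G * ψ Ginv := map_mul ψ _ _
      _ = 0 := by rw [hψG, zero_mul]
  exact one_ne_zero this

/-- Smooth functions separate points. -/
theorem aux_separate {x y : M} (hxy : x ≠ y) :
    ∃ f : C^(⊤ : ℕ∞)⟮𝓡 n, M; ℝ⟯, f x ≠ f y := by
  haveI : LocallyCompactSpace M := Manifold.locallyCompact_of_finiteDimensional (𝓡 n)
  obtain ⟨f, hf0, hf1, -⟩ := exists_contMDiffMap_zero_one_of_isClosed (𝓡 n)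
    (isClosed_singleton (x := y)) (isClosed_singleton (x := x))
    (by simpa [disjoint_singleton] using (Ne.symm hxy))
  exact ⟨f, by simp [hf0 rfl, hf1 rfl]⟩

end Aux

/-- **Dual-number-valued characters are tangent vectors**: every unital `ℝ`-algebra
homomorphism `φ : C^∞(M) → ℝ[ε]` into the dual numbers is of the form
`φ f = f x + D f · ε` for a unique point `x ∈ M` and a unique point derivation `D`
at `x`. -/
theorem dualNumber_characters_are_tangent_vectors {n : ℕ} {M : Type*} [TopologicalSpace M]
    [ChartedSpace (EuclideanSpace ℝ (Fin n)) M]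
    [IsManifold (𝓡 n) (⊤ : ℕ∞) M] [T2Space M] [SecondCountableTopology M]
    (φ : C^(⊤ : ℕ∞)⟮𝓡 n, M; ℝ⟯ →ₐ[ℝ] DualNumber ℝ) :
    ∃! xD : M × (C^(⊤ : ℕ∞)⟮𝓡 n, M; ℝ⟯ →ₗ[ℝ] ℝ),
      (∀ f g : C^(⊤ : ℕ∞)⟮𝓡 n, M; ℝ⟯,
        xD.2 (f * g) = f xD.1 * xD.2 g + xD.2 f * g xD.1) ∧
      ∀ f : C^(⊤ : ℕ∞)⟮𝓡 n, M; ℝ⟯,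
        φ f = TrivSqZeroExt.inl (f xD.1) + TrivSqZeroExt.inr (xD.2 f) := by
  set ψ : C^(⊤ : ℕ∞)⟮𝓡 n, M; ℝ⟯ →ₐ[ℝ] ℝ := (TrivSqZeroExt.fstHom ℝ ℝ ℝ).comp φ with hψ
  obtain ⟨x, hx⟩ := aux_char_is_eval ψ
  set D : C^(⊤ : ℕ∞)⟮𝓡 n, M; ℝ⟯ →ₗ[ℝ] ℝ :=
    (TrivSqZeroExt.sndHom ℝ ℝ).comp φ.toLinearMap with hD
  have hfst : ∀ f : C^(⊤ : ℕ∞)⟮𝓡 n, M; ℝ⟯, (φ f).fst = f x := fun f => hx f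
  refine ⟨(x, D), ⟨?_, ?_⟩, ?_⟩
  · intro f g
    have : (φ (f * g)).snd = (φ f * φ g).snd := by rw [map_mul]
    rw [TrivSqZeroExt.snd_mul] at this
    simp [D, hfst f, hfst g, smul_eq_mul, mul_comm]
  · intro f
    have := TrivSqZeroExt.inl_fst_add_inr_snd_eq (φ f)
    rw [hfst f] at this
    exact this.symm
  · rintro ⟨y, D'⟩ ⟨-, hy⟩
    have hyx : y = x := by
      by_contra hne
      obtain ⟨f, hf⟩ := aux_separate (n := n) (M := M) hne
      have h1 : (φ f).fst = f y := by rw [hy f]; simp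
      rw [hfst f] at h1
      exact hf (h1.symm)
    subst hyx
    have hD' : D' = D := by
      ext f
      have h2 : (φ f).snd = D' f := by rw [hy f]; simp
      simpa [D] using h2.symm
    rw [hD']
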